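/- For every positive integer m, the subspace of SU(2)^m consisting of all tuples (A₁, ..., A_m) such that Aᵢ * Aⱼ = Aⱼ * Aᵢ for all i, j is a connected topological space. -/

import Mathlib

/-- `SU(2)`, i.e. `Matrix.specialUnitaryGroup (Fin 2) ℂ`, topologized as a subspace of the
`2 × 2` complex matrices (via the subtype topology). -/
abbrev SU2 := Matrix.specialUnitaryGroup (Fin 2) ℂ

/-- The group structure on `SU(2)` (inverse given by conjugate transpose). -/
noncomputable instance : Group SU2 :=
  { (inferInstance : Monoid SU2) with
    inv := fun A => ⟨star A.1, by
      refine ⟨⟨?_, ?_⟩, ?_⟩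
      · rw [star_star]; exact A.2.1.2
      · rw [star_star]; exact A.2.1.1
      · show Matrix.det (star A.1) = 1
        rw [Matrix.star_eq_conjTranspose, Matrix.det_conjTranspose]
        have h : Matrix.det A.1 = 1 := A.2.2
        rw [h, star_one]⟩
    inv_mul_cancel := fun A => Subtype.ext A.2.1.1 }

/-- The commutator `[a, b] = a * b * a⁻¹ * b⁻¹`. -/
def brk {G : Type*} [Group G] (a b : G) : G := a * b * a⁻¹ * b⁻¹


open Matrix Complex

lemma su2_entries (A : Matrix (Fin 2) (Fin 2) ℂ) (hA : A ∈ Matrix.specialUnitaryGroup (Fin 2) ℂ) :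
    A 1 0 = -(starRingEnd ℂ) (A 0 1) ∧ A 1 1 = (starRingEnd ℂ) (A 0 0) ∧
      Complex.normSq (A 0 0) + Complex.normSq (A 0 1) = 1 := by
  obtain ⟨hu, hdet⟩ := Matrix.mem_specialUnitaryGroup_iff.mp hA
  have h1 : A * star A = 1 := Matrix.mem_unitaryGroup_iff.mp hu
  have h2 : A * A.adjugate = 1 := by rw [Matrix.mul_adjugate, hdet, one_smul]
  have h3 : star A = A.adjugate := by
    rw [← Matrix.inv_eq_right_inv h1, ← Matrix.inv_eq_right_inv h2]
  have e1 := congrFun (congrFun h3 0) 1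
  have e2 := congrFun (congrFun h3 1) 1
  have e3 := congrFun (congrFun h1 0) 0
  simp [Matrix.adjugate_fin_two, Matrix.star_apply, Matrix.mul_apply, Fin.sum_univ_two] at e1 e2 e3
  refine ⟨?_, ?_, ?_⟩
  · have := congrArg (starRingEnd ℂ) e1
    simpa using this
  · have := congrArg (starRingEnd ℂ) e2
    simpa using this
  · rw [← Complex.ofReal_inj]
    push_cast [← Complex.mul_conj]
    rw [← e3]

lemma mem_of_form (a b : ℂ) (h : Complex.normSq a + Complex.normSq b = 1) :
    !![a, b; -(starRingEnd ℂ) b, (starRingEnd ℂ) a] ∈ Matrix.specialUnitaryGroup (Fin 2) ℂ := by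
  have h' : a * (starRingEnd ℂ) a + b * (starRingEnd ℂ) b = 1 := by
    rw [Complex.mul_conj, Complex.mul_conj, ← Complex.ofReal_add, h, Complex.ofReal_one]
  rw [Matrix.mem_specialUnitaryGroup_iff]
  constructor
  · rw [Matrix.mem_unitaryGroup_iff]
    ext i j
    fin_cases i <;> fin_cases j <;>
      simp [Matrix.mul_apply, Fin.sum_univ_two, Matrix.star_apply, Matrix.one_apply] <;>
      ring_nf <;>
      (try simp_all) <;> linear_combination h'
  · rw [Matrix.det_fin_two]
    norm_num
    linear_combination h'

noncomputable def Dm (θ : ℝ) : Matrix (Fin 2) (Fin 2) ℂ :=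
  !![Complex.exp (θ * Complex.I), 0; 0, Complex.exp (-θ * Complex.I)]

lemma Dm_mem (θ : ℝ) : Dm θ ∈ Matrix.specialUnitaryGroup (Fin 2) ℂ := by
  have : Dm θ = !![Complex.exp (θ * Complex.I), 0;
      -(starRingEnd ℂ) 0, (starRingEnd ℂ) (Complex.exp (θ * Complex.I))] := by
    rw [Dm, ← Complex.exp_conj]
    simp [Complex.conj_ofReal]
  rw [this]
  apply mem_of_form
  have : Complex.normSq (Complex.exp (θ * Complex.I)) = 1 := by
    rw [← Complex.sq_norm, Complex.norm_exp_ofReal_mul_I]; norm_num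
  simp [this]

noncomputable def DU (θ : ℝ) : SU2 := ⟨Dm θ, Dm_mem θ⟩

lemma DU_coe (θ : ℝ) : (DU θ : Matrix (Fin 2) (Fin 2) ℂ) = Dm θ := rfl

lemma DU_zero : DU 0 = 1 := by
  apply Subtype.ext
  show Dm 0 = (1 : Matrix (Fin 2) (Fin 2) ℂ)
  ext i j
  fin_cases i <;> fin_cases j <;> simp [Dm, Matrix.one_apply]

lemma diag_to_DU (C : SU2) (h01 : (C : Matrix (Fin 2) (Fin 2) ℂ) 0 1 = 0)
    (h10 : (C : Matrix (Fin 2) (Fin 2) ℂ) 1 0 = 0) : ∃ θ : ℝ, C = DU θ := by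
  obtain ⟨e1, e2, e3⟩ := su2_entries C.1 C.2
  set a := (C : Matrix (Fin 2) (Fin 2) ℂ) 0 0 with ha
  have hn : Complex.normSq a = 1 := by
    rw [h01] at e3; simpa using e3
  have habs : ‖a‖ = 1 := by
    have := Complex.sq_norm a
    nlinarith [norm_nonneg a]
  refine ⟨a.arg, ?_⟩
  have hexp : Complex.exp (a.arg * Complex.I) = a := by
    have := Complex.norm_mul_exp_arg_mul_I a
    rwa [habs, Complex.ofReal_one, one_mul] at this
  have hgen : ∀ θ : ℝ, Complex.exp (-(θ:ℝ) * Complex.I) = (starRingEnd ℂ) (Complex.exp (θ * Complex.I)) := by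
    intro θ
    rw [← Complex.exp_conj]
    congr 1
    simp [Complex.conj_ofReal]
  have hexp' : Complex.exp (-(a.arg : ℝ) * Complex.I) = (starRingEnd ℂ) a := by
    rw [hgen, hexp]
  have h10' : (C : Matrix (Fin 2) (Fin 2) ℂ) 1 0 = 0 := by rw [e1, h01]; simp
  apply Subtype.ext
  show (C : Matrix (Fin 2) (Fin 2) ℂ) = Dm a.arg
  rw [Matrix.eta_fin_two (C : Matrix (Fin 2) (Fin 2) ℂ), h01, h10', e2, Dm, hexp, hexp']

lemma commutant_diag (M C : Matrix (Fin 2) (Fin 2) ℂ) (h01 : M 0 1 = 0) (h10 : M 1 0 = 0)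
    (hne : M 0 0 ≠ M 1 1) (hc : C * M = M * C) : C 0 1 = 0 ∧ C 1 0 = 0 := by
  have e1 := congrFun (congrFun hc 0) 1
  have e2 := congrFun (congrFun hc 1) 0
  simp [Matrix.mul_apply, Fin.sum_univ_two, h01, h10] at e1 e2
  rw [mul_comm] at e1 e2
  constructor
  · by_contra h
    exact hne (mul_right_cancel₀ h e1).symm
  · by_contra h
    exact hne (mul_right_cancel₀ h e2)

lemma entry_calc (x y s N : ℝ) (b : ℂ) (hN : (N:ℂ) ≠ 0)
    (hs2 : (s:ℂ)^2 = (y:ℂ)^2 + b * (starRingEnd ℂ) b) :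
    !![(x:ℂ) + y*I, b; -(starRingEnd ℂ) b, (x:ℂ) - y*I] *
      !![-b/N, ((y:ℂ)-s)*I/N; ((y:ℂ)-s)*I/N, -(starRingEnd ℂ) b/N] =
    !![-b/N, ((y:ℂ)-s)*I/N; ((y:ℂ)-s)*I/N, -(starRingEnd ℂ) b/N] *
      !![(x:ℂ) + s*I, 0; 0, (x:ℂ) - s*I] := by
  have hI := Complex.I_sq
  ext i j
  fin_cases i <;> fin_cases j
  · simp [Matrix.mul_apply, Fin.sum_univ_two]
    field_simp
    ring
  · simp [Matrix.mul_apply, Fin.sum_univ_two]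
    field_simp
    linear_combination hs2 + ((y:ℂ)^2 - (s:ℂ)^2)*hI
  · simp [Matrix.mul_apply, Fin.sum_univ_two]
    field_simp
    linear_combination (-1:ℂ)*hs2 + ((s:ℂ)^2 - (y:ℂ)^2)*hI
  · simp [Matrix.mul_apply, Fin.sum_univ_two]
    field_simp
    ring

lemma diag_conj (A : SU2) (h : (A : Matrix (Fin 2) (Fin 2) ℂ) 0 1 ≠ 0 ∨
    ((A : Matrix (Fin 2) (Fin 2) ℂ) 0 0).im ≠ 0) :
    ∃ g : SU2, ((g⁻¹ * A * g : SU2) : Matrix (Fin 2) (Fin 2) ℂ) 0 1 = 0 ∧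
      ((g⁻¹ * A * g : SU2) : Matrix (Fin 2) (Fin 2) ℂ) 1 0 = 0 ∧
      (((g⁻¹ * A * g : SU2) : Matrix (Fin 2) (Fin 2) ℂ) 0 0).im ≠ 0 := by
  obtain ⟨e1, e2, e3⟩ := su2_entries A.1 A.2
  by_cases hb : (A : Matrix (Fin 2) (Fin 2) ℂ) 0 1 = 0
  · refine ⟨1, ?_⟩
    have h1 : (1 : SU2)⁻¹ * A * 1 = A := by group
    rw [h1]
    refine ⟨hb, ?_, ?_⟩
    · rw [e1, hb]; simp
    · rcases h with h | h
      · exact absurd hb h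
      · exact h
  · set x : ℝ := ((A : Matrix (Fin 2) (Fin 2) ℂ) 0 0).re with hx
    set y : ℝ := ((A : Matrix (Fin 2) (Fin 2) ℂ) 0 0).im with hy
    set b : ℂ := (A : Matrix (Fin 2) (Fin 2) ℂ) 0 1 with hbdef
    have hnb : 0 < Complex.normSq b := Complex.normSq_pos.mpr hb
    set s : ℝ := Real.sqrt (y^2 + Complex.normSq b) with hsdef
    have hs2 : s^2 = y^2 + Complex.normSq b := Real.sq_sqrt (by positivity)
    have hspos : 0 < s := Real.sqrt_pos.mpr (by positivity)
    have hys : y < s := by nlinarith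
    set N : ℝ := Real.sqrt (2*s*(s-y)) with hNdef
    have hN2 : N^2 = 2*s*(s-y) := Real.sq_sqrt (by nlinarith)
    have hNpos : 0 < N := Real.sqrt_pos.mpr (by nlinarith)
    have hNne : (N:ℂ) ≠ 0 := by exact_mod_cast hNpos.ne'
    set G : Matrix (Fin 2) (Fin 2) ℂ :=
      !![-b/N, ((y:ℂ)-s)*I/N; ((y:ℂ)-s)*I/N, -(starRingEnd ℂ) b/N] with hGdef
    have hc1 : -(starRingEnd ℂ) (((y:ℂ)-s)*I/N) = ((y:ℂ)-s)*I/N := by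
      simp [map_div₀, Complex.conj_ofReal]
      ring
    have hc2 : (starRingEnd ℂ) (-b/N) = -(starRingEnd ℂ) b/N := by
      simp [map_div₀, Complex.conj_ofReal]
    have hGform : G = !![-b/N, ((y:ℂ)-s)*I/N;
        -(starRingEnd ℂ) (((y:ℂ)-s)*I/N), (starRingEnd ℂ) (-b/N)] := by
      rw [hGdef, hc1, hc2]
    have hGmem : G ∈ Matrix.specialUnitaryGroup (Fin 2) ℂ := by
      rw [hGform]
      apply mem_of_form
      have h1 : Complex.normSq (-b/N) = Complex.normSq b / N^2 := by
        simp [Complex.normSq_div, Complex.normSq_ofReal, sq]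
      have hys' : ((y:ℂ) - s) = ((y - s : ℝ) : ℂ) := by push_cast; ring
      have h2 : Complex.normSq (((y:ℂ)-s)*I/N) = (y-s)^2 / N^2 := by
        rw [Complex.normSq_div, Complex.normSq_mul, Complex.normSq_I, hys',
          Complex.normSq_ofReal, Complex.normSq_ofReal]
        ring
      rw [h1, h2]
      field_simp
      nlinarith
    set gS : SU2 := ⟨G, hGmem⟩ with hgS
    have hA : (A : Matrix (Fin 2) (Fin 2) ℂ) = !![(x:ℂ)+y*I, b; -(starRingEnd ℂ) b, (x:ℂ)-y*I] := by
      rw [Matrix.eta_fin_two (A : Matrix (Fin 2) (Fin 2) ℂ), e1, e2, ← hbdef]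
      have ha0 : (A : Matrix (Fin 2) (Fin 2) ℂ) 0 0 = (x:ℂ) + y*I := (Complex.re_add_im _).symm
      have ha1 : (starRingEnd ℂ) ((A : Matrix (Fin 2) (Fin 2) ℂ) 0 0) = (x:ℂ) - y*I := by
        rw [ha0]
        simp [Complex.ext_iff]
      rw [ha1, ha0]
    have hs2c : (s:ℂ)^2 = (y:ℂ)^2 + b * (starRingEnd ℂ) b := by
      rw [Complex.mul_conj]
      exact_mod_cast hs2
    have hmul : (A : Matrix (Fin 2) (Fin 2) ℂ) * G = G * !![(x:ℂ)+s*I, 0; 0, (x:ℂ)-s*I] := by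
      rw [hA, hGdef]
      exact entry_calc x y s N b hNne hs2c
    have hstar : star G * G = 1 := Matrix.mem_unitaryGroup_iff'.mp hGmem.1
    have hfin : ((gS⁻¹ * A * gS : SU2) : Matrix (Fin 2) (Fin 2) ℂ) =
        !![(x:ℂ)+s*I, 0; 0, (x:ℂ)-s*I] := by
      have hcoe : ((gS⁻¹ * A * gS : SU2) : Matrix (Fin 2) (Fin 2) ℂ) =
          star G * (A : Matrix (Fin 2) (Fin 2) ℂ) * G := rfl
      rw [hcoe, mul_assoc, hmul, ← mul_assoc, hstar, one_mul]
    refine ⟨gS, ?_, ?_, ?_⟩ <;> rw [hfin]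
    · simp
    · simp
    · simp
      exact hspos.ne'

lemma DU_comm (θ φ : ℝ) : DU θ * DU φ = DU φ * DU θ := by
  apply Subtype.ext
  show Dm θ * Dm φ = Dm φ * Dm θ
  ext i j
  fin_cases i <;> fin_cases j <;>
    simp [Dm, Matrix.mul_apply, Fin.sum_univ_two] <;> ring

lemma key {m : ℕ} (A : Fin m → SU2) (hA : ∀ i j, A i * A j = A j * A i) :
    ∃ g : SU2, ∀ i, ∃ θ : ℝ, A i = g * DU θ * g⁻¹ := by
  by_cases h : ∃ k, (A k : Matrix (Fin 2) (Fin 2) ℂ) 0 1 ≠ 0 ∨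
      ((A k : Matrix (Fin 2) (Fin 2) ℂ) 0 0).im ≠ 0
  · obtain ⟨k, hk⟩ := h
    obtain ⟨g, h01, h10, him⟩ := diag_conj (A k) hk
    refine ⟨g, fun i => ?_⟩
    set M : SU2 := g⁻¹ * A k * g with hM
    set C : SU2 := g⁻¹ * A i * g with hC
    have hcomm : C * M = M * C := by
      calc C * M = g⁻¹ * (A i * A k) * g := by rw [hC, hM]; group
      _ = g⁻¹ * (A k * A i) * g := by rw [hA i k]
      _ = M * C := by rw [hC, hM]; group
    have hMC : C.1 * M.1 = M.1 * C.1 := congrArg Subtype.val hcomm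
    have e2 := (su2_entries M.1 M.2).2.1
    have hne : M.1 0 0 ≠ M.1 1 1 := by
      rw [e2]
      intro hcon
      have himeq := congrArg Complex.im hcon
      rw [Complex.conj_im] at himeq
      exact him (by linarith)
    obtain ⟨hc01, hc10⟩ := commutant_diag M.1 C.1 h01 h10 hne hMC
    obtain ⟨θ, hθ⟩ := diag_to_DU C hc01 hc10
    refine ⟨θ, ?_⟩
    rw [← hθ, hC]
    group
  · push_neg at h
    refine ⟨1, fun i => ?_⟩
    have h01 := (h i).1
    have h10 : (A i).1 1 0 = 0 := by
      rw [(su2_entries _ (A i).2).1, h01]; simp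
    obtain ⟨θ, hθ⟩ := diag_to_DU (A i) h01 h10
    exact ⟨θ, by rw [← hθ]; group⟩

lemma Dm_continuous : Continuous Dm := by
  apply continuous_matrix
  intro i j
  fin_cases i <;> fin_cases j <;> simp [Dm] <;> fun_prop

/-- For every positive integer `m`, the subspace of `SU(2)^m` consisting of mutually
commuting `m`-tuples is connected. -/
theorem connected_commuting_tuples (m : ℕ) (hm : 0 < m) :
    ConnectedSpace {A : Fin m → SU2 | ∀ i j : Fin m, A i * A j = A j * A i} := by
  apply Subtype.connectedSpace
  apply IsPathConnected.isConnected
  refine ⟨fun _ => 1, fun i j => rfl, ?_⟩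
  intro y hy
  obtain ⟨g, hg⟩ := key y hy
  choose θ hθ using hg
  have hconj : ∀ u v : ℝ, (g * DU u * g⁻¹) * (g * DU v * g⁻¹) = g * (DU u * DU v) * g⁻¹ := by
    intro u v; group
  refine ⟨{ toFun := fun t i => g * DU (t * θ i) * g⁻¹,
            continuous_toFun := ?_, source' := ?_, target' := ?_ }, ?_⟩
  · apply continuous_pi
    intro i
    refine continuous_induced_rng.mpr ?_
    show Continuous fun t : unitInterval =>
      (g : Matrix (Fin 2) (Fin 2) ℂ) * Dm ((t : ℝ) * θ i) * ((g⁻¹ : SU2) : Matrix (Fin 2) (Fin 2) ℂ)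
    exact (continuous_const.matrix_mul
      (Dm_continuous.comp (continuous_subtype_val.mul continuous_const))).matrix_mul
      continuous_const
  · funext i
    show g * DU ((0 : ℝ) * θ i) * g⁻¹ = 1
    rw [show (0:ℝ) * θ i = 0 by ring, DU_zero]
    group
  · funext i
    show g * DU ((1 : ℝ) * θ i) * g⁻¹ = y i
    rw [one_mul, ← hθ i]
  · intro t
    intro i j
    show (g * DU (t * θ i) * g⁻¹) * (g * DU (t * θ j) * g⁻¹) =
      (g * DU (t * θ j) * g⁻¹) * (g * DU (t * θ i) * g⁻¹)
    rw [hconj, hconj, DU_comm]
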